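/- Let R = ℝ[t^{d₁},…,t^{d_r}] with gcd = 1 and conductor 𝔠, and let D_k denote the maximal number of distinct real zeros of a nonzero polynomial in R of degree at most k. Then for all k ≥ 0, D_{𝔠+k} = D_𝔠 + k. -/

import Mathlib

open Polynomial

namespace DescartesAux

/-! ### Sign changes of a list of reals -/

noncomputable def V : List ℝ → ℕ
  | [] => 0
  | a :: l =>
    match l with
    | [] => 0
    | b :: _ => (if a * b < 0 then 1 else 0) + V l

@[simp] lemma V_nil : V [] = 0 := rfl

@[simp] lemma V_singleton (a : ℝ) : V [a] = 0 := rfl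

lemma V_cons_cons (a b : ℝ) (l : List ℝ) :
    V (a :: b :: l) = (if a * b < 0 then 1 else 0) + V (b :: l) := rfl

lemma V_append : ∀ (l₁ : List ℝ) (a b : ℝ) (l₂ : List ℝ),
    V ((l₁ ++ [a]) ++ b :: l₂) = V (l₁ ++ [a]) + (if a * b < 0 then 1 else 0) + V (b :: l₂)
  | [], a, b, l₂ => by simp [V_cons_cons]
  | [x], a, b, l₂ => by simp [V_cons_cons]; ring
  | x :: y :: l₁, a, b, l₂ => by
    have ih := V_append (y :: l₁) a b l₂
    simp only [List.cons_append, List.nil_append, List.append_assoc] at ih ⊢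
    rw [V_cons_cons, V_cons_cons x y, ih]
    ring

lemma sign_iff {a b a' b' : ℝ} (h : 0 < (a * b) * (a' * b')) : a * b < 0 ↔ a' * b' < 0 := by
  constructor <;> intro h1 <;> nlinarith

lemma V_map_congr {u v : ℕ → ℝ} :
    ∀ E : List ℕ, (∀ n ∈ E, 0 < u n * v n) → V (E.map u) = V (E.map v)
  | [], _ => rfl
  | [n], _ => rfl
  | n :: m :: E, h => by
    have h1 := h n (by simp)
    have h2 := h m (by simp)
    have ih := V_map_congr (m :: E) (fun a ha => h a (List.mem_cons_of_mem _ ha))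
    simp only [List.map_cons] at ih ⊢
    rw [V_cons_cons, V_cons_cons, ih]
    congr 1
    have hiff : (u n * u m < 0) ↔ (v n * v m < 0) := sign_iff (by nlinarith)
    simp [hiff]

lemma V_map_congr_neg {u v : ℕ → ℝ} :
    ∀ E : List ℕ, (∀ n ∈ E, u n * v n < 0) → V (E.map u) = V (E.map v)
  | [], _ => rfl
  | [n], _ => rfl
  | n :: m :: E, h => by
    have h1 := h n (by simp)
    have h2 := h m (by simp)
    have ih := V_map_congr_neg (m :: E) (fun a ha => h a (List.mem_cons_of_mem _ ha))
    simp only [List.map_cons] at ih ⊢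
    rw [V_cons_cons, V_cons_cons, ih]
    congr 1
    have hiff : (u n * u m < 0) ↔ (v n * v m < 0) := sign_iff (by nlinarith)
    simp [hiff]

lemma V_pos_split {c : ℕ → ℝ} :
    ∀ E : List ℕ, 0 < V (E.map c) → ∃ E₁ e e' E₂, E = E₁ ++ e :: e' :: E₂ ∧ c e * c e' < 0
  | [], h => by simp at h
  | [n], h => by simp at h
  | n :: m :: E, h => by
    by_cases hc : c n * c m < 0
    · exact ⟨[], n, m, E, by simp, hc⟩
    · have h2 : 0 < V ((m :: E).map c) := by
        simp only [List.map_cons] at h ⊢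
        rw [V_cons_cons] at h
        simpa [hc] using h
      obtain ⟨E₁, e, e', E₂, hEq, hs⟩ := V_pos_split (m :: E) h2
      exact ⟨n :: E₁, e, e', E₂, by simp [hEq], hs⟩

lemma V_zero_sign {c : ℕ → ℝ} :
    ∀ (E : List ℕ) (a : ℕ), V ((a :: E).map c) = 0 → (∀ n ∈ a :: E, c n ≠ 0) →
      ∀ n ∈ a :: E, 0 < c a * c n
  | [], a, _, hnz, n, hn => by
    simp only [List.mem_singleton] at hn
    subst hn
    exact mul_self_pos.mpr (hnz n (by simp))
  | m :: E, a, hV, hnz, n, hn => by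
    simp only [List.map_cons, V_cons_cons] at hV
    have h1 : ¬ (c a * c m < 0) := by
      intro h; simp [h] at hV
    have h2 : V ((m :: E).map c) = 0 := by
      simp only [List.map_cons] at hV ⊢; omega
    have ham : 0 < c a * c m :=
      lt_of_le_of_ne (not_lt.mp h1) (Ne.symm (mul_ne_zero (hnz a (by simp)) (hnz m (by simp))))
    rcases List.mem_cons.mp hn with rfl | hn'
    · exact mul_self_pos.mpr (hnz n (by simp))
    · have := V_zero_sign E m h2 (fun k hk => hnz k (List.mem_cons_of_mem _ hk)) n hn'
      have hca : 0 < (c a * c m) * (c m * c n) := mul_pos ham this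
      have hcm : 0 < c m * c m := mul_self_pos.mpr (hnz m (by simp))
      have hm0 : c m ≠ 0 := hnz m (by simp)
      have heq : c a * c n = ((c a * c m) * (c m * c n)) / (c m * c m) := by
        field_simp
      rw [heq]
      exact div_pos hca hcm

/-! ### Counting roots from sign changes at sample points (IVT) -/

lemma V_le_card_filter (f : ℝ[X]) :
    ∀ (l : List ℝ) (x : ℝ), (x :: l).Pairwise (· < ·) →
      (∀ y ∈ x :: l, f.eval y ≠ 0) →
      V ((x :: l).map (fun y => f.eval y)) ≤
        (f.roots.toFinset.filter (fun r => x < r)).card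
  | [], x, _, _ => by simp
  | y :: l, x, hs, hnz => by
    have hf0 : f ≠ 0 := fun h => hnz x (by simp) (by simp [h])
    have hxy : x < y := (List.pairwise_cons.mp hs).1 y (by simp)
    have hs' : (y :: l).Pairwise (· < ·) := (List.pairwise_cons.mp hs).2
    have ih := V_le_card_filter f l y hs' (fun z hz => hnz z (List.mem_cons_of_mem _ hz))
    have hsub : f.roots.toFinset.filter (fun r => y < r) ⊆
        f.roots.toFinset.filter (fun r => x < r) := by
      intro r hr
      simp only [Finset.mem_filter] at hr ⊢
      exact ⟨hr.1, hxy.trans hr.2⟩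
    simp only [List.map_cons, V_cons_cons]
    by_cases hc : f.eval x * f.eval y < 0
    · have hcont : ContinuousOn (fun z => f.eval z) (Set.Icc x y) :=
        (f.continuous).continuousOn
      have hroot : ∃ ρ ∈ Set.Ioo x y, f.eval ρ = 0 := by
        rcases lt_or_gt_of_ne (hnz x (by simp)) with hx0 | hx0
        · have hy0 : 0 < f.eval y := by nlinarith
          obtain ⟨ρ, hρ, hρ0⟩ := intermediate_value_Ioo hxy.le hcont ⟨hx0, hy0⟩
          exact ⟨ρ, hρ, hρ0⟩
        · have hy0 : f.eval y < 0 := by nlinarith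
          obtain ⟨ρ, hρ, hρ0⟩ := intermediate_value_Ioo' hxy.le hcont ⟨hy0, hx0⟩
          exact ⟨ρ, hρ, hρ0⟩
      obtain ⟨ρ, hρmem, hρ0⟩ := hroot
      have hρin : ρ ∈ f.roots.toFinset.filter (fun r => x < r) := by
        simp only [Finset.mem_filter, Multiset.mem_toFinset]
        exact ⟨(mem_roots hf0).mpr hρ0, hρmem.1⟩
      have hρnot : ρ ∉ f.roots.toFinset.filter (fun r => y < r) := by
        simp only [Finset.mem_filter, Multiset.mem_toFinset]
        rintro ⟨-, h⟩
        exact absurd hρmem.2 (not_lt.mpr h.le)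
      have hins : insert ρ (f.roots.toFinset.filter (fun r => y < r)) ⊆
          f.roots.toFinset.filter (fun r => x < r) :=
        Finset.insert_subset hρin hsub
      have hcard := Finset.card_le_card hins
      rw [Finset.card_insert_of_notMem hρnot] at hcard
      simp only [hc, if_true]
      simp only [List.map_cons] at ih
      omega
    · simp only [hc, if_false]
      simp only [List.map_cons] at ih
      calc 0 + V (f.eval y :: l.map (fun z => f.eval z)) ≤
          (f.roots.toFinset.filter (fun r => y < r)).card := by simpa using ih
        _ ≤ _ := Finset.card_le_card hsub

/-- Between any two elements of `s` there is an element of `t` implies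
`s.card ≤ t.card + 1`. -/
lemma card_between : ∀ (n : ℕ) (s t : Finset ℝ), s.card = n →
    (∀ a ∈ s, ∀ b ∈ s, a < b → ∃ x ∈ t, a < x ∧ x < b) → s.card ≤ t.card + 1 := by
  intro n
  induction n with
  | zero => intro s t hcard _; omega
  | succ n ih =>
    intro s t hcard h
    rcases Nat.eq_zero_or_pos n with hn | hn
    · omega
    · have hs : s.Nonempty := by rw [← Finset.card_pos]; omega
      set M := s.max' hs with hM
      have hMmem : M ∈ s := s.max'_mem hs
      have hcard' : (s.erase M).card = n := by
        have := Finset.card_erase_add_one hMmem; omega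
      have hs'ne : (s.erase M).Nonempty := by rw [← Finset.card_pos]; omega
      set m2 := (s.erase M).max' hs'ne with hm2def
      have hm2 : m2 ∈ s.erase M := Finset.max'_mem _ _
      have hm2s : m2 ∈ s := Finset.mem_of_mem_erase hm2
      have hm2M : m2 < M :=
        lt_of_le_of_ne (Finset.le_max' s m2 hm2s) (Finset.ne_of_mem_erase hm2)
      obtain ⟨x, hxt, hx1, hx2⟩ := h m2 hm2s M hMmem hm2M
      have hih := ih (s.erase M) (t.erase x) hcard' ?_
      · have := Finset.card_erase_add_one hxt
        omega
      · intro a ha b hb hab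
        obtain ⟨y, hyt, hy1, hy2⟩ :=
          h a (Finset.mem_of_mem_erase ha) b (Finset.mem_of_mem_erase hb) hab
        refine ⟨y, Finset.mem_erase.mpr ⟨?_, hyt⟩, hy1, hy2⟩
        have hbm2 : b ≤ m2 := Finset.le_max' _ b hb
        rintro rfl
        linarith

/-! ### Coefficient lists of polynomials -/

noncomputable def cl (p : ℝ[X]) : List ℝ := (p.support.sort (· ≤ ·)).map (fun n => p.coeff n)

noncomputable def W (p : ℝ[X]) : ℕ :=
  V (cl p) + V (cl (p.comp (-X))) + (if p.coeff 0 = 0 then 1 else 0)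

lemma sort_ne_nil {p : ℝ[X]} (hp : p ≠ 0) : p.support.sort (· ≤ ·) ≠ [] := by
  intro h
  apply hp
  rw [← support_eq_empty]
  have h2 := Finset.sort_toFinset p.support (· ≤ ·)
  rw [h] at h2
  simpa using h2.symm

lemma coeff_comp_neg_X (p : ℝ[X]) (n : ℕ) : (p.comp (-X)).coeff n = (-1) ^ n * p.coeff n := by
  induction p using Polynomial.induction_on' with
  | add p q hp hq => simp only [add_comp, coeff_add, hp, hq]; ring
  | monomial k a =>
    have h1 : ((monomial k) a).comp (-X) = C (a * (-1) ^ k) * X ^ k := by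
      rw [← C_mul_X_pow_eq_monomial, mul_comp, C_comp, pow_comp, X_comp, neg_pow]
      rw [C_mul, map_pow, map_neg, map_one]
      ring
    rw [h1, coeff_C_mul, coeff_X_pow, coeff_monomial]
    by_cases h : n = k
    · subst h; simp [mul_comm]
    · simp [h, Ne.symm h]

lemma support_comp_neg_X (p : ℝ[X]) : (p.comp (-X)).support = p.support := by
  ext n
  have hne : ((-1 : ℝ) ^ n) ≠ 0 := pow_ne_zero _ (by norm_num)
  simp [mem_support_iff, coeff_comp_neg_X, hne]

lemma comp_neg_X_ne_zero {p : ℝ[X]} (hp : p ≠ 0) : p.comp (-X) ≠ 0 := by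
  intro h
  apply hp
  rw [← support_eq_empty, ← support_comp_neg_X, h, support_zero]

lemma natDegree_comp_neg_X (p : ℝ[X]) : (p.comp (-X)).natDegree = p.natDegree := by
  apply le_antisymm
  · rw [natDegree_le_iff_coeff_eq_zero]
    intro N hN
    rw [coeff_comp_neg_X, coeff_eq_zero_of_natDegree_lt hN, mul_zero]
  · rw [natDegree_le_iff_coeff_eq_zero]
    intro N hN
    have h := coeff_eq_zero_of_natDegree_lt hN
    rw [coeff_comp_neg_X] at h
    rcases mul_eq_zero.mp h with h | h
    · exact absurd h (pow_ne_zero _ (by norm_num))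
    · exact h

lemma leadingCoeff_comp_neg_X (p : ℝ[X]) :
    (p.comp (-X)).leadingCoeff = (-1) ^ p.natDegree * p.leadingCoeff := by
  rw [leadingCoeff, leadingCoeff, natDegree_comp_neg_X, coeff_comp_neg_X]

lemma cl_comp_neg_X (p : ℝ[X]) :
    cl (p.comp (-X)) = (p.support.sort (· ≤ ·)).map (fun n => (-1) ^ n * p.coeff n) := by
  rw [cl, support_comp_neg_X]
  exact List.map_congr_left (fun n _ => coeff_comp_neg_X p n)

/-! ### Positive and negative root counts -/

noncomputable def posR (p : ℝ[X]) : Finset ℝ := p.roots.toFinset.filter (fun r => 0 < r)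
noncomputable def negR (p : ℝ[X]) : Finset ℝ := p.roots.toFinset.filter (fun r => r < 0)

lemma mem_posR {p : ℝ[X]} (hp : p ≠ 0) {x : ℝ} : x ∈ posR p ↔ p.eval x = 0 ∧ 0 < x := by
  simp [posR, Finset.mem_filter, Multiset.mem_toFinset, mem_roots hp, IsRoot]

lemma mem_negR {p : ℝ[X]} (hp : p ≠ 0) {x : ℝ} : x ∈ negR p ↔ p.eval x = 0 ∧ x < 0 := by
  simp [negR, Finset.mem_filter, Multiset.mem_toFinset, mem_roots hp, IsRoot]

lemma eval_pos_of_coeff_pos {p : ℝ[X]} (hp : p ≠ 0) (h : ∀ n ∈ p.support, 0 < p.coeff n)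
    {x : ℝ} (hx : 0 < x) : 0 < p.eval x := by
  rw [eval_eq_sum, sum_def]
  apply Finset.sum_pos
  · intro n hn
    exact mul_pos (h n hn) (pow_pos hx n)
  · rw [Finset.nonempty_iff_ne_empty]
    intro h2
    exact hp (support_eq_empty.mp h2)

theorem posR_card_le : ∀ (v : ℕ) (p : ℝ[X]), p ≠ 0 → V (cl p) = v → (posR p).card ≤ v := by
  intro v
  induction v using Nat.strong_induction_on with
  | _ v ih =>
    intro p hp hv
    rcases Nat.eq_zero_or_pos v with rfl | hvpos
    · -- base case: all coefficients of the same sign, no positive roots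
      have hnz : ∀ n ∈ p.support.sort (· ≤ ·), p.coeff n ≠ 0 := by
        intro n hn
        exact mem_support_iff.mp ((Finset.mem_sort (· ≤ ·)).mp hn)
      obtain ⟨e₀, E', hE⟩ : ∃ e₀ E', p.support.sort (· ≤ ·) = e₀ :: E' := by
        cases hE : p.support.sort (· ≤ ·) with
        | nil => exact absurd hE (sort_ne_nil hp)
        | cons a l => exact ⟨a, l, rfl⟩
      have hsign : ∀ n ∈ e₀ :: E', 0 < p.coeff e₀ * p.coeff n := by
        apply V_zero_sign (c := fun n => p.coeff n) E' e₀
        · rw [← hE]; exact hv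
        · rw [← hE]; exact hnz
      have hempty : posR p = ∅ := by
        rw [Finset.eq_empty_iff_forall_notMem]
        intro r hr
        rw [mem_posR hp] at hr
        have hce₀ : p.coeff e₀ ≠ 0 := hnz e₀ (by rw [hE]; simp)
        have hq0 : C (p.coeff e₀) * p ≠ 0 := mul_ne_zero (by simpa using hce₀) hp
        have hq : ∀ n ∈ (C (p.coeff e₀) * p).support, 0 < (C (p.coeff e₀) * p).coeff n := by
          intro n hn
          rw [coeff_C_mul]
          have hn' : n ∈ p.support := by
            have h2 : (C (p.coeff e₀) * p).coeff n ≠ 0 := mem_support_iff.mp hn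
            rw [coeff_C_mul] at h2
            exact mem_support_iff.mpr (right_ne_zero_of_mul h2)
          exact hsign n (by rw [← hE]; exact (Finset.mem_sort _).mpr hn')
        have hpos := eval_pos_of_coeff_pos hq0 hq hr.2
        rw [eval_mul, eval_C, hr.1, mul_zero] at hpos
        exact lt_irrefl 0 hpos
      simp [hempty]
    · -- inductive step
      have hsorted0 : (p.support.sort (· ≤ ·)).Pairwise (· < ·) := (Finset.sortedLT_sort _).pairwise
      have hvE : 0 < V ((p.support.sort (· ≤ ·)).map (fun n => p.coeff n)) := by
        rw [show ((p.support.sort (· ≤ ·)).map (fun n => p.coeff n)) = cl p from rfl, hv]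
        exact hvpos
      obtain ⟨E₁, e, e', E₂, hEq, hce⟩ := V_pos_split _ hvE
      set lam : ℝ := (e : ℝ) + 1/2 with hlam
      set g : ℝ[X] := X * derivative p - C lam * p with hgdef
      have coeff_g : ∀ n : ℕ, g.coeff n = ((n : ℝ) - lam) * p.coeff n := by
        intro n
        have hxd : (X * derivative p).coeff n = (n : ℝ) * p.coeff n := by
          cases n with
          | zero => simp [mul_coeff_zero]
          | succ k =>
            rw [coeff_X_mul, coeff_derivative]
            push_cast
            ring
        rw [hgdef, coeff_sub, hxd, coeff_C_mul]
        ring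
      have wne : ∀ n : ℕ, ((n : ℝ) - lam) ≠ 0 := by
        intro n h
        have h2 : ((2 * n : ℕ) : ℝ) = ((2 * e + 1 : ℕ) : ℝ) := by
          push_cast
          rw [hlam] at h
          linarith
        have h3 : 2 * n = 2 * e + 1 := Nat.cast_injective h2
        omega
      have hsupp : g.support = p.support := by
        ext n
        simp [mem_support_iff, coeff_g, mul_ne_zero_iff, wne n]
      have hg0 : g ≠ 0 := by
        intro h
        apply hp
        rw [← support_eq_empty, ← hsupp, h, support_zero]
      -- sorted structure
      have hsorted : (E₁ ++ e :: e' :: E₂).Pairwise (· < ·) := hEq ▸ hsorted0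
      have h1lt : ∀ n ∈ E₁, n < e := by
        intro n hn
        exact (List.pairwise_append.mp hsorted).2.2 n hn e (by simp)
      have hee' : e < e' :=
        (List.pairwise_cons.mp (List.pairwise_append.mp hsorted).2.1).1 e' (by simp)
      have h2lt : ∀ n ∈ E₂, e' < n := by
        intro n hn
        exact (List.pairwise_cons.mp
          (List.pairwise_cons.mp (List.pairwise_append.mp hsorted).2.1).2).1 n hn
      have hwneg : ∀ n ∈ E₁ ++ [e], ((n : ℝ) - lam) < 0 := by
        intro n hn
        rcases List.mem_append.mp hn with hn | hn
        · have h3 : (n : ℝ) < (e : ℝ) := by exact_mod_cast h1lt n hn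
          rw [hlam]; linarith
        · simp only [List.mem_singleton] at hn
          subst hn
          rw [hlam]; linarith
      have hwpos : ∀ n ∈ e' :: E₂, 0 < ((n : ℝ) - lam) := by
        intro n hn
        have hen : e < n := by
          rcases List.mem_cons.mp hn with rfl | hn'
          · exact hee'
          · exact hee'.trans (h2lt n hn')
        have h3 : (e : ℝ) + 1 ≤ (n : ℝ) := by exact_mod_cast hen
        rw [hlam]; linarith
      -- membership facts
      have hmemE : ∀ n ∈ E₁ ++ e :: e' :: E₂, p.coeff n ≠ 0 := by
        intro n hn
        apply mem_support_iff.mp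
        apply (Finset.mem_sort (α := ℕ) (· ≤ ·)).mp
        rw [hEq]
        exact hn
      -- V computations
      have hVp : V (cl p) =
          V ((E₁ ++ [e]).map (fun n => p.coeff n)) + 1 + V ((e' :: E₂).map (fun n => p.coeff n)) := by
        have hcl : cl p = ((E₁.map (fun n => p.coeff n)) ++ [p.coeff e]) ++
            (p.coeff e' :: E₂.map (fun n => p.coeff n)) := by
          rw [cl, hEq]; simp
        rw [hcl, V_append]
        have : (E₁ ++ [e]).map (fun n => p.coeff n) = E₁.map (fun n => p.coeff n) ++ [p.coeff e] := by simp
        rw [this]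
        simp [hce]
      have hVg : V (cl g) =
          V ((E₁ ++ [e]).map (fun n => g.coeff n)) + V ((e' :: E₂).map (fun n => g.coeff n)) := by
        have hcl : cl g = ((E₁.map (fun n => g.coeff n)) ++ [g.coeff e]) ++
            (g.coeff e' :: E₂.map (fun n => g.coeff n)) := by
          rw [cl, hsupp, hEq]; simp
        rw [hcl, V_append]
        have hno : ¬ (g.coeff e * g.coeff e' < 0) := by
          rw [coeff_g, coeff_g]
          have hwe : ((e : ℝ) - lam) < 0 := hwneg e (by simp)
          have hwe' : 0 < ((e' : ℝ) - lam) := hwpos e' (by simp)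
          have h3 : ((e : ℝ) - lam) * ((e' : ℝ) - lam) < 0 := mul_neg_of_neg_of_pos hwe hwe'
          nlinarith [mul_pos_of_neg_of_neg h3 hce]
        have : (E₁ ++ [e]).map (fun n => g.coeff n) = E₁.map (fun n => g.coeff n) ++ [g.coeff e] := by simp
        rw [this]
        simp [hno]
      have hc1 : V ((E₁ ++ [e]).map (fun n => g.coeff n)) =
          V ((E₁ ++ [e]).map (fun n => p.coeff n)) := by
        apply V_map_congr_neg
        intro n hn
        have hcn : p.coeff n ≠ 0 := by
          apply hmemE
          rcases List.mem_append.mp hn with h | h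
          · exact List.mem_append.mpr (Or.inl h)
          · simp only [List.mem_singleton] at h; subst h; simp
        rw [coeff_g]
        have : ((n : ℝ) - lam) * p.coeff n * p.coeff n = ((n : ℝ) - lam) * (p.coeff n * p.coeff n) := by
          ring
        rw [this]
        exact mul_neg_of_neg_of_pos (hwneg n hn) (mul_self_pos.mpr hcn)
      have hc2 : V ((e' :: E₂).map (fun n => g.coeff n)) =
          V ((e' :: E₂).map (fun n => p.coeff n)) := by
        apply V_map_congr
        intro n hn
        have hcn : p.coeff n ≠ 0 := by
          apply hmemE
          rcases List.mem_cons.mp hn with rfl | h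
          · simp
          · simp [h]
        rw [coeff_g]
        have : ((n : ℝ) - lam) * p.coeff n * p.coeff n = ((n : ℝ) - lam) * (p.coeff n * p.coeff n) := by
          ring
        rw [this]
        exact mul_pos (hwpos n hn) (mul_self_pos.mpr hcn)
      have hVglt : V (cl g) < v := by
        rw [hVg, hc1, hc2]
        omega
      have hgle : (posR g).card ≤ V (cl g) := ih (V (cl g)) hVglt g hg0 rfl
      -- betweenness via Rolle
      have hbet : ∀ a ∈ posR p, ∀ b ∈ posR p, a < b → ∃ x ∈ posR g, a < x ∧ x < b := by
        intro a ha b hb hab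
        rw [mem_posR hp] at ha hb
        set h : ℝ → ℝ := fun y => p.eval y * y ^ (-lam) with hh
        have hcont : ContinuousOn h (Set.Icc a b) := by
          apply ContinuousOn.mul
          · exact (p.continuous).continuousOn
          · intro y hy
            have hy0 : y ≠ 0 := (lt_of_lt_of_le ha.2 hy.1).ne'
            exact (Real.continuousAt_rpow_const y (-lam) (Or.inl hy0)).continuousWithinAt
        have hderiv : ∀ y ∈ Set.Ioo a b, HasDerivAt h (g.eval y * y ^ (-lam - 1)) y := by
          intro y hy
          have hy0 : 0 < y := lt_trans ha.2 hy.1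
          have H1 : HasDerivAt (fun z => p.eval z) (p.derivative.eval y) y := p.hasDerivAt y
          have H2 : HasDerivAt (fun z : ℝ => z ^ (-lam)) (-lam * y ^ (-lam - 1)) y :=
            Real.hasDerivAt_rpow_const (Or.inl hy0.ne')
          have H := H1.mul H2
          refine H.congr_deriv ?_
          have hg : g.eval y = y * p.derivative.eval y - lam * p.eval y := by
            rw [hgdef]; simp [eval_sub, eval_mul, eval_X, eval_C]
          have hsplit : y ^ (-lam) = y * y ^ (-lam - 1) := by
            have h4 := Real.rpow_add hy0 1 (-lam - 1)
            rw [Real.rpow_one] at h4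
            rw [show (1 : ℝ) + (-lam - 1) = -lam by ring] at h4
            exact h4
          rw [hg, hsplit]
          ring
        have hab0 : h a = h b := by
          rw [hh]; simp [ha.1, hb.1]
        obtain ⟨x, hx, hx0⟩ := exists_hasDerivAt_eq_zero hab hcont hab0 hderiv
        have hxpos : 0 < x := lt_trans ha.2 hx.1
        have hgx : g.eval x = 0 := by
          rcases mul_eq_zero.mp hx0 with h | h
          · exact h
          · exact absurd h (Real.rpow_pos_of_pos hxpos _).ne'
        exact ⟨x, (mem_posR hg0).mpr ⟨hgx, hxpos⟩, hx.1, hx.2⟩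
      have := card_between (posR p).card (posR p) (posR g) rfl hbet
      omega

theorem posR_le (p : ℝ[X]) (hp : p ≠ 0) : (posR p).card ≤ V (cl p) :=
  posR_card_le _ p hp rfl

lemma negR_card (p : ℝ[X]) (hp : p ≠ 0) : (negR p).card = (posR (p.comp (-X))).card := by
  have hc0 : p.comp (-X) ≠ 0 := comp_neg_X_ne_zero hp
  have heval : ∀ x : ℝ, (p.comp (-X)).eval x = p.eval (-x) := by
    intro x; rw [eval_comp]; simp
  apply Finset.card_bij (fun x _ => -x)
  · intro a ha
    rw [mem_negR hp] at ha
    rw [mem_posR hc0, heval, neg_neg]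
    exact ⟨ha.1, by linarith [ha.2]⟩
  · intro a _ b _ hab
    exact neg_inj.mp hab
  · intro b hb
    rw [mem_posR hc0, heval] at hb
    refine ⟨-b, ?_, neg_neg b⟩
    rw [mem_negR hp]
    exact ⟨hb.1, by linarith [hb.2]⟩

lemma card_split (s : Finset ℝ) :
    s.card = (s.filter (fun r => 0 < r)).card + (s.filter (fun r => r < 0)).card
      + (s.filter (fun r => r = 0)).card := by
  classical
  rw [← Finset.card_filter_add_card_filter_not (p := fun r : ℝ => 0 < r)]
  have h1 : s.filter (fun r => ¬ 0 < r) =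
      s.filter (fun r => r < 0) ∪ s.filter (fun r => r = 0) := by
    ext r
    simp only [Finset.mem_filter, Finset.mem_union, not_lt]
    constructor
    · rintro ⟨hr, hle⟩
      rcases lt_or_eq_of_le hle with h | h
      · exact Or.inl ⟨hr, h⟩
      · exact Or.inr ⟨hr, h⟩

    · rintro (⟨hr, h⟩ | ⟨hr, h⟩)
      · exact ⟨hr, h.le⟩
      · exact ⟨hr, h.le⟩
  have h2 : Disjoint (s.filter (fun r => r < 0)) (s.filter (fun r => r = 0)) := by
    rw [Finset.disjoint_left]
    intro r hr1 hr2
    simp only [Finset.mem_filter] at hr1 hr2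
    rw [hr2.2] at hr1
    exact lt_irrefl 0 hr1.2
  rw [h1, Finset.card_union_of_disjoint h2]
  omega

theorem card_roots_le_W (p : ℝ[X]) (hp : p ≠ 0) : p.roots.toFinset.card ≤ W p := by
  rw [card_split]
  have h1 : (p.roots.toFinset.filter (fun r => 0 < r)).card ≤ V (cl p) := posR_le p hp
  have h2 : (p.roots.toFinset.filter (fun r => r < 0)).card ≤ V (cl (p.comp (-X))) := by
    have := negR_card p hp
    rw [show (p.roots.toFinset.filter (fun r => r < 0)) = negR p from rfl, this]
    exact posR_le _ (comp_neg_X_ne_zero hp)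
  have h3 : (p.roots.toFinset.filter (fun r => r = 0)).card ≤ (if p.coeff 0 = 0 then 1 else 0) := by
    by_cases h : p.coeff 0 = 0
    · simp only [h, if_true]
      have hsub : p.roots.toFinset.filter (fun r => r = 0) ⊆ {0} := by
        intro r hr
        simp only [Finset.mem_filter] at hr
        simp [hr.2]
      calc (p.roots.toFinset.filter (fun r => r = 0)).card ≤ ({0} : Finset ℝ).card :=
            Finset.card_le_card hsub
        _ = 1 := Finset.card_singleton _
    · simp only [h, if_false]
      have hempty : p.roots.toFinset.filter (fun r => r = 0) = ∅ := by
        rw [Finset.eq_empty_iff_forall_notMem]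
        intro r hr
        simp only [Finset.mem_filter, Multiset.mem_toFinset] at hr
        apply h
        rw [coeff_zero_eq_eval_zero]
        have h3 := (mem_roots hp).mp hr.1
        rw [hr.2] at h3
        exact h3
      simp [hempty]
  exact Nat.add_le_add (Nat.add_le_add h1 h2) h3

/-! ### Realizability (Grabiner-type construction) -/

lemma sign_stable {u v w : ℝ} (h1 : |u| < |v|) (h2 : 0 < v * w) : 0 < (u + v) * w := by
  obtain ⟨hl, hr⟩ := abs_lt.mp h1
  have hv0 : v ≠ 0 := by
    rintro rfl
    simp only [abs_zero] at h1
    linarith [abs_nonneg u]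
  rcases lt_or_gt_of_ne hv0 with hv | hv
  · have hvabs : |v| = -v := abs_of_neg hv
    have hw : w < 0 := by nlinarith
    have huv : u + v < 0 := by rw [hvabs] at hr; linarith
    exact mul_pos_of_neg_of_neg huv hw
  · have hvabs : |v| = v := abs_of_pos hv
    have hw : 0 < w := by nlinarith
    have huv : 0 < u + v := by rw [hvabs] at hl; linarith
    exact mul_pos huv hw

lemma realize_aux : ∀ (E : List ℕ), E ≠ [] → E.Pairwise (· < ·) →
    ∀ c : ℕ → ℝ, (∀ n ∈ E, c n ≠ 0) →
    ∃ (f : ℝ[X]) (t : ℕ → ℝ),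
      f.support = E.toFinset ∧
      (∀ n ∈ E, 0 < t n) ∧
      (∀ n ∈ E, ∀ m ∈ E, n < m → t n < t m) ∧
      (∀ n ∈ E, 0 < f.eval (t n) * c n) ∧
      (∀ n ∈ E, 0 < f.eval (-(t n)) * (c n * (-1) ^ n))
  | [], h, _, _, _ => absurd rfl h
  | [n], _, _, c, hc => by
    have hcn : c n ≠ 0 := hc n (by simp)
    refine ⟨C (c n) * X ^ n, fun _ => 1, ?_, ?_, ?_, ?_, ?_⟩
    · rw [support_C_mul_X_pow n hcn]; simp
    · intro _ _; norm_num
    · intro a ha b hb hab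
      simp only [List.mem_singleton] at ha hb
      subst ha; subst hb; omega
    · intro m hm
      simp only [List.mem_singleton] at hm
      subst hm
      simp only [eval_mul, eval_C, eval_pow, eval_X, one_pow, mul_one]
      exact mul_self_pos.mpr hcn
    · intro m hm
      simp only [List.mem_singleton] at hm
      subst hm
      simp only [eval_mul, eval_C, eval_pow, eval_X]
      have h1 : c m * (-1 : ℝ) ^ m ≠ 0 := mul_ne_zero hcn (pow_ne_zero _ (by norm_num))
      have h2 := mul_self_pos.mpr h1
      nlinarith [h2]
  | n :: m :: E', hne, hsorted, c, hc => by
    obtain ⟨f', t', hsupp', htpos', htmono', hpos', hneg'⟩ :=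
      realize_aux (m :: E') (by simp) (List.pairwise_cons.mp hsorted).2 c
        (fun k hk => hc k (List.mem_cons_of_mem _ hk))
    have hnlt : ∀ k ∈ m :: E', n < k := (List.pairwise_cons.mp hsorted).1
    have hnmem : n ∉ (m :: E') := fun h => lt_irrefl n (hnlt n h)
    have hcn : c n ≠ 0 := hc n (by simp)
    have hne' : ∀ k ∈ m :: E', f'.eval (t' k) ≠ 0 := by
      intro k hk h
      have := hpos' k hk
      rw [h] at this; simp at this
    have hne'' : ∀ k ∈ m :: E', f'.eval (-(t' k)) ≠ 0 := by
      intro k hk h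
      have := hneg' k hk
      rw [h] at this; simp at this
    -- γ
    set B := (m :: E').toFinset with hB
    have hBne : B.Nonempty := ⟨m, by simp [hB]⟩
    have hmemB : ∀ k, k ∈ B ↔ k ∈ m :: E' := by intro k; simp [hB]
    set bnd : ℕ → ℝ :=
      fun k => min |f'.eval (t' k)| |f'.eval (-(t' k))| / (|c n| * (t' k) ^ n + 1) with hbnd
    have hbndpos : ∀ k ∈ m :: E', 0 < bnd k := by
      intro k hk
      apply div_pos
      · exact lt_min (abs_pos.mpr (hne' k hk)) (abs_pos.mpr (hne'' k hk))
      · have h0 : 0 ≤ |c n| * (t' k) ^ n :=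
          mul_nonneg (abs_nonneg _) (pow_pos (htpos' k hk) n).le
        linarith
    set gam := (B.image bnd).min' (hBne.image bnd) with hgam
    have hgampos : 0 < gam := by
      obtain ⟨k, hk, hkeq⟩ := Finset.mem_image.mp ((B.image bnd).min'_mem (hBne.image bnd))
      rw [hgam, ← hkeq]
      exact hbndpos k ((hmemB k).mp hk)
    have hgamle : ∀ k ∈ m :: E',
        gam * (|c n| * (t' k) ^ n) < min |f'.eval (t' k)| |f'.eval (-(t' k))| := by
      intro k hk
      have h1 : gam ≤ bnd k :=
        Finset.min'_le _ _ (Finset.mem_image_of_mem bnd ((hmemB k).mpr hk))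
      have hden : (0 : ℝ) < |c n| * (t' k) ^ n + 1 := by
        have h0 : 0 ≤ |c n| * (t' k) ^ n :=
          mul_nonneg (abs_nonneg _) (pow_pos (htpos' k hk) n).le
        linarith
      have h2 : bnd k * (|c n| * (t' k) ^ n + 1) = min |f'.eval (t' k)| |f'.eval (-(t' k))| := by
        rw [hbnd]
        exact div_mul_cancel₀ _ hden.ne'
      nlinarith [mul_le_mul_of_nonneg_right h1 hden.le]
    -- tmin
    set tmin := (B.image t').min' (hBne.image t') with htmin
    have htminpos : 0 < tmin := by
      obtain ⟨k, hk, hkeq⟩ := Finset.mem_image.mp ((B.image t').min'_mem (hBne.image t'))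
      rw [htmin, ← hkeq]
      exact htpos' k ((hmemB k).mp hk)
    have htminle : ∀ k ∈ m :: E', tmin ≤ t' k :=
      fun k hk => Finset.min'_le _ _ (Finset.mem_image_of_mem t' ((hmemB k).mpr hk))
    -- factor f' = X^(n+1) * q
    obtain ⟨q, hq⟩ : (X : ℝ[X]) ^ (n + 1) ∣ f' := by
      rw [X_pow_dvd_iff]
      intro d hd
      by_contra h
      have hd2 : d ∈ f'.support := mem_support_iff.mpr h
      rw [hsupp'] at hd2
      have := hnlt d ((hmemB d).mp hd2)
      omega
    obtain ⟨M0, hM0⟩ :=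
      (isCompact_Icc (a := (-1 : ℝ)) (b := 1)).exists_bound_of_continuousOn
        ((q.continuous).continuousOn)
    set M := max M0 0 with hM
    have hM0' : (0 : ℝ) ≤ M := le_max_right _ _
    have hMq : ∀ x ∈ Set.Icc (-1 : ℝ) 1, |q.eval x| ≤ M := by
      intro x hx
      calc |q.eval x| = ‖q.eval x‖ := (Real.norm_eq_abs _).symm
        _ ≤ M0 := hM0 x hx
        _ ≤ M := le_max_left _ _
    set tau := (1/2) * min (min 1 tmin) (gam * |c n| / (M + 1)) with htau
    have hgc : 0 < gam * |c n| := mul_pos hgampos (abs_pos.mpr hcn)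
    have hM1 : (0 : ℝ) < M + 1 := by linarith
    have htaupos : 0 < tau := by
      apply mul_pos (by norm_num)
      exact lt_min (lt_min one_pos htminpos) (div_pos hgc hM1)
    have htau1 : tau ≤ 1 := by
      have h1 : min (min 1 tmin) (gam * |c n| / (M + 1)) ≤ 1 :=
        le_trans (min_le_left _ _) (min_le_left _ _)
      rw [htau]
      linarith
    have htaulttmin : ∀ k ∈ m :: E', tau < t' k := by
      intro k hk
      have h1 : min (min 1 tmin) (gam * |c n| / (M + 1)) ≤ tmin :=
        le_trans (min_le_left _ _) (min_le_right _ _)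
      have h2 : tau < tmin := by
        rw [htau]; linarith
      exact lt_of_lt_of_le h2 (htminle k hk)
    have hkey : ∀ s : ℝ, s = tau ∨ s = -tau → |f'.eval s| < gam * |c n| * tau ^ n := by
      intro s hs
      have habs : |s| = tau := by
        rcases hs with rfl | rfl
        · exact abs_of_pos htaupos
        · rw [abs_neg]; exact abs_of_pos htaupos
      have hsIcc : s ∈ Set.Icc (-1 : ℝ) 1 := by
        have := abs_le.mp (le_of_eq (habs.trans rfl) |>.trans htau1)
        exact ⟨this.1, this.2⟩
      have heval : f'.eval s = s ^ (n + 1) * q.eval s := by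
        rw [hq]; simp [eval_mul, eval_pow, eval_X]
      have hqs : |q.eval s| ≤ M := hMq s hsIcc
      have htle : tau ≤ 1/2 * (gam * |c n| / (M + 1)) := by
        have := min_le_right (min 1 tmin) (gam * |c n| / (M + 1))
        rw [htau]; linarith
      have htauM : tau * (M + 1) ≤ 1/2 * (gam * |c n|) := by
        calc tau * (M + 1) ≤ (1/2 * (gam * |c n| / (M + 1))) * (M + 1) :=
              mul_le_mul_of_nonneg_right htle hM1.le
          _ = 1/2 * (gam * |c n|) := by field_simp
      have htauMlt : tau * M < gam * |c n| := by nlinarith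
      rw [heval, abs_mul, abs_pow, habs]
      calc tau ^ (n + 1) * |q.eval s| = tau ^ n * (tau * |q.eval s|) := by ring
        _ ≤ tau ^ n * (tau * M) := by
            apply mul_le_mul_of_nonneg_left ?_ (by positivity)
            exact mul_le_mul_of_nonneg_left hqs htaupos.le
        _ < tau ^ n * (gam * |c n|) := by
            apply mul_lt_mul_of_pos_left htauMlt (by positivity)
        _ = gam * |c n| * tau ^ n := by ring
    -- define f and t
    set f := C (gam * c n) * X ^ n + f' with hf
    have hcoefn : gam * c n ≠ 0 := mul_ne_zero hgampos.ne' hcn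
    have hf'n : f'.coeff n = 0 := by
      by_contra h
      have h2 : n ∈ f'.support := mem_support_iff.mpr h
      rw [hsupp'] at h2
      exact hnmem ((hmemB n).mp h2)
    have hfco : ∀ k, f.coeff k = (if k = n then gam * c n else 0) + f'.coeff k := by
      intro k
      rw [hf, coeff_add, coeff_C_mul, coeff_X_pow]
      simp
    have hsuppf : f.support = (n :: m :: E').toFinset := by
      ext k
      simp only [mem_support_iff, hfco]
      by_cases hkn : k = n
      · subst hkn
        simp [hf'n, hcoefn]
      · simp only [hkn, if_false, zero_add]
        rw [← mem_support_iff, hsupp', hmemB k]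
        simp [hkn]
    have hevalf : ∀ s : ℝ, f.eval s = gam * c n * s ^ n + f'.eval s := by
      intro s
      rw [hf]; simp [eval_add, eval_mul, eval_pow, eval_C, eval_X]
    set t := fun k => if k = n then tau else t' k with ht
    have htval : ∀ k ∈ m :: E', t k = t' k := by
      intro k hk
      have : k ≠ n := fun h => hnmem (h ▸ hk)
      simp [ht, this]
    refine ⟨f, t, hsuppf, ?_, ?_, ?_, ?_⟩
    · intro k hk
      rcases List.mem_cons.mp hk with rfl | hk'
      · simp [ht, htaupos]
      · rw [htval k hk']
        exact htpos' k hk'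
    · intro a ha b hb hab
      rcases List.mem_cons.mp ha with rfl | ha'
      · rcases List.mem_cons.mp hb with rfl | hb'
        · omega
        · rw [htval b hb']
          simp only [ht, if_pos rfl]
          exact htaulttmin b hb'
      · rcases List.mem_cons.mp hb with rfl | hb'
        · exact absurd hab (not_lt.mpr (hnlt a ha').le)
        · rw [htval a ha', htval b hb']
          exact htmono' a ha' b hb' hab
    · intro k hk
      rcases List.mem_cons.mp hk with rfl | hk'
      · simp only [ht, if_pos rfl]
        rw [hevalf]
        rw [add_comm (gam * c k * tau ^ k)]
        apply sign_stable
        · have h1 := hkey tau (Or.inl rfl)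
          rw [abs_mul, abs_mul, abs_pow, abs_of_pos hgampos, abs_of_pos htaupos]
          calc |f'.eval tau| < gam * |c k| * tau ^ k := h1
            _ = gam * |c k| * tau ^ k := rfl
        · have h1 : 0 < c k * c k := mul_self_pos.mpr hcn
          have h2 : 0 < tau ^ k := pow_pos htaupos k
          rw [show gam * c k * tau ^ k * c k = gam * (c k * c k) * tau ^ k from by ring]
          exact mul_pos (mul_pos hgampos h1) h2
      · rw [htval k hk']
        rw [hevalf]
        apply sign_stable
        · have h1 := hgamle k hk'
          have h2 : min |f'.eval (t' k)| |f'.eval (-(t' k))| ≤ |f'.eval (t' k)| := min_le_left _ _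
          rw [abs_mul, abs_mul, abs_pow, abs_of_pos hgampos, abs_of_pos (htpos' k hk')]
          calc gam * |c n| * t' k ^ n = gam * (|c n| * t' k ^ n) := by ring
            _ < |f'.eval (t' k)| := lt_of_lt_of_le h1 h2
        · exact hpos' k hk'
    · intro k hk
      rcases List.mem_cons.mp hk with rfl | hk'
      · simp only [ht, if_pos rfl]
        rw [hevalf]
        rw [add_comm (gam * c k * (-tau) ^ k)]
        apply sign_stable
        · have h1 := hkey (-tau) (Or.inr rfl)
          rw [abs_mul, abs_mul, abs_pow, abs_of_pos hgampos, abs_neg, abs_of_pos htaupos]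
          exact h1
        · have hrw : gam * c k * (-tau) ^ k * (c k * (-1) ^ k)
              = gam * (c k * c k) * tau ^ k * ((-1 : ℝ) ^ k * (-1 : ℝ) ^ k) := by
            rw [neg_pow]
            ring
          rw [hrw, ← mul_pow]
          have h1 : 0 < c k * c k := mul_self_pos.mpr hcn
          have h2 : 0 < tau ^ k := pow_pos htaupos k
          norm_num
          exact mul_pos (mul_pos hgampos h1) h2
      · rw [htval k hk']
        rw [hevalf]
        apply sign_stable
        · have h1 := hgamle k hk'
          have h2 : min |f'.eval (t' k)| |f'.eval (-(t' k))| ≤ |f'.eval (-(t' k))| :=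
            min_le_right _ _
          rw [abs_mul, abs_mul, abs_pow, abs_of_pos hgampos, abs_neg, abs_of_pos (htpos' k hk')]
          calc gam * |c n| * t' k ^ n = gam * (|c n| * t' k ^ n) := by ring
            _ < |f'.eval (-(t' k))| := lt_of_lt_of_le h1 h2
        · exact hneg' k hk'

theorem realize (p : ℝ[X]) (hp : p ≠ 0) :
    ∃ f : ℝ[X], f ≠ 0 ∧ f.support = p.support ∧ W p ≤ f.roots.toFinset.card := by
  have hEne : p.support.sort (· ≤ ·) ≠ [] := sort_ne_nil hp
  have hEs : (p.support.sort (· ≤ ·)).Pairwise (· < ·) := (Finset.sortedLT_sort _).pairwise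
  have hEc : ∀ n ∈ p.support.sort (· ≤ ·), p.coeff n ≠ 0 :=
    fun n hn => mem_support_iff.mp ((Finset.mem_sort (· ≤ ·)).mp hn)
  obtain ⟨f, t, hsupp, htpos, htmono, hpos, hneg⟩ :=
    realize_aux (p.support.sort (· ≤ ·)) hEne hEs (fun n => p.coeff n) hEc
  have hET : (p.support.sort (· ≤ ·)).toFinset = p.support := Finset.sort_toFinset _ _
  have hsupp' : f.support = p.support := by rw [hsupp, hET]
  have hf0 : f ≠ 0 := by
    intro h
    apply hp
    rw [← support_eq_empty, ← hsupp', h, support_zero]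
  refine ⟨f, hf0, hsupp', ?_⟩
  rw [card_split]
  obtain ⟨e₀, E', hEcons⟩ : ∃ e₀ E', p.support.sort (· ≤ ·) = e₀ :: E' := by
    cases hE : p.support.sort (· ≤ ·) with
    | nil => exact absurd hE hEne
    | cons a l => exact ⟨a, l, rfl⟩
  -- samples are sorted and positive
  have hsorted2 : ((p.support.sort (· ≤ ·)).map t).Pairwise (· < ·) := by
    rw [List.pairwise_map]
    have h0 : (p.support.sort (· ≤ ·)).Pairwise
        (fun a b => a ∈ p.support.sort (· ≤ ·) ∧ b ∈ p.support.sort (· ≤ ·) ∧ a < b) :=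
      List.Pairwise.and_mem.mp hEs
    exact h0.imp (fun {a b} h => htmono a h.1 b h.2.1 h.2.2)
  -- positive side
  have hposcount : V (cl p) ≤ (f.roots.toFinset.filter (fun r => 0 < r)).card := by
    have hcong : V (cl p) = V ((p.support.sort (· ≤ ·)).map (fun k => f.eval (t k))) := by
      apply V_map_congr
      intro k hk
      rw [mul_comm]
      exact hpos k hk
    have hmm : ((p.support.sort (· ≤ ·)).map t).map (fun y => f.eval y)
        = (p.support.sort (· ≤ ·)).map (fun k => f.eval (t k)) := by
      rw [List.map_map]; rfl
    have hnz : ∀ y ∈ t e₀ :: E'.map t, f.eval y ≠ 0 := by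
      intro y hy
      have hy2 : y ∈ ((p.support.sort (· ≤ ·)).map t) := by rw [hEcons]; simpa using hy
      obtain ⟨k, hk, rfl⟩ := List.mem_map.mp hy2
      intro h
      have := hpos k hk
      rw [h] at this; simp at this
    have hsort3 : (t e₀ :: E'.map t).Pairwise (· < ·) := by
      have := hsorted2
      rw [hEcons] at this
      simpa using this
    have hVle := V_le_card_filter f (E'.map t) (t e₀) hsort3 hnz
    have hVeq : V ((t e₀ :: E'.map t).map (fun y => f.eval y)) = V (cl p) := by
      rw [show (t e₀ :: E'.map t) = ((p.support.sort (· ≤ ·)).map t) by rw [hEcons]; simp,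
        hmm, ← hcong]
    have hsubfil : f.roots.toFinset.filter (fun r => t e₀ < r) ⊆
        f.roots.toFinset.filter (fun r => 0 < r) := by
      intro r hr
      simp only [Finset.mem_filter] at hr ⊢
      have hte₀ : 0 < t e₀ := htpos e₀ (by rw [hEcons]; simp)
      exact ⟨hr.1, hte₀.trans hr.2⟩
    calc V (cl p) = V ((t e₀ :: E'.map t).map (fun y => f.eval y)) := hVeq.symm
      _ ≤ (f.roots.toFinset.filter (fun r => t e₀ < r)).card := hVle
      _ ≤ _ := Finset.card_le_card hsubfil
  -- negative side
  have hF0 : f.comp (-X) ≠ 0 := comp_neg_X_ne_zero hf0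
  have hFeval : ∀ x : ℝ, (f.comp (-X)).eval x = f.eval (-x) := by
    intro x; rw [eval_comp]; simp
  have hnegcount : V (cl (p.comp (-X))) ≤
      (f.roots.toFinset.filter (fun r => r < 0)).card := by
    have hclF : cl (p.comp (-X)) =
        (p.support.sort (· ≤ ·)).map (fun k => (-1) ^ k * p.coeff k) := cl_comp_neg_X p
    have hcong : V ((p.support.sort (· ≤ ·)).map (fun k => (-1) ^ k * p.coeff k))
        = V ((p.support.sort (· ≤ ·)).map (fun k => (f.comp (-X)).eval (t k))) := by
      apply V_map_congr
      intro k hk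
      rw [hFeval]
      have h1 := hneg k hk
      nlinarith [h1]
    have hnz : ∀ y ∈ t e₀ :: E'.map t, (f.comp (-X)).eval y ≠ 0 := by
      intro y hy
      have hy2 : y ∈ ((p.support.sort (· ≤ ·)).map t) := by rw [hEcons]; simpa using hy
      obtain ⟨k, hk, rfl⟩ := List.mem_map.mp hy2
      rw [hFeval]
      intro h
      have := hneg k hk
      rw [h] at this; simp at this
    have hsort3 : (t e₀ :: E'.map t).Pairwise (· < ·) := by
      have := hsorted2
      rw [hEcons] at this
      simpa using this
    have hVle := V_le_card_filter (f.comp (-X)) (E'.map t) (t e₀) hsort3 hnz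
    have hVeq : V ((t e₀ :: E'.map t).map (fun y => (f.comp (-X)).eval y))
        = V ((p.support.sort (· ≤ ·)).map (fun k => (f.comp (-X)).eval (t k))) := by
      rw [show (t e₀ :: E'.map t) = ((p.support.sort (· ≤ ·)).map t) by rw [hEcons]; simp,
        List.map_map]
      rfl
    have hsubfil : (f.comp (-X)).roots.toFinset.filter (fun r => t e₀ < r) ⊆
        posR (f.comp (-X)) := by
      intro r hr
      simp only [Finset.mem_filter, posR] at hr ⊢
      have hte₀ : 0 < t e₀ := htpos e₀ (by rw [hEcons]; simp)
      exact ⟨hr.1, hte₀.trans hr.2⟩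
    have hcards : (posR (f.comp (-X))).card = (negR f).card := (negR_card f hf0).symm
    calc V (cl (p.comp (-X)))
        = V ((t e₀ :: E'.map t).map (fun y => (f.comp (-X)).eval y)) := by
          rw [hclF, hcong, ← hVeq]
      _ ≤ ((f.comp (-X)).roots.toFinset.filter (fun r => t e₀ < r)).card := hVle
      _ ≤ (posR (f.comp (-X))).card := Finset.card_le_card hsubfil
      _ = (negR f).card := hcards
      _ = _ := rfl
  -- zero root
  have hzerocount : (if p.coeff 0 = 0 then 1 else 0) ≤
      (f.roots.toFinset.filter (fun r => r = 0)).card := by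
    by_cases h : p.coeff 0 = 0
    · simp only [h, if_true]
      have hf00 : f.coeff 0 = 0 := by
        by_contra hne2
        have h2 : (0 : ℕ) ∈ f.support := mem_support_iff.mpr hne2
        rw [hsupp'] at h2
        exact (mem_support_iff.mp h2) h
      have hmem : (0 : ℝ) ∈ f.roots.toFinset.filter (fun r => r = 0) := by
        simp only [Finset.mem_filter, Multiset.mem_toFinset]
        refine ⟨(mem_roots hf0).mpr ?_, by simp⟩
        show f.eval 0 = 0
        rw [← coeff_zero_eq_eval_zero]
        exact hf00
      exact Finset.card_pos.mpr ⟨0, hmem⟩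
    · simp [h]
  rw [W]
  exact Nat.add_le_add (Nat.add_le_add hposcount hnegcount) hzerocount

/-! ### Pattern surgery -/

lemma sort_insert_top {s : Finset ℕ} {m : ℕ} (h : ∀ x ∈ s, x < m) :
    (insert m s).sort (· ≤ ·) = s.sort (· ≤ ·) ++ [m] := by
  have hmns : m ∉ s := fun hm => lt_irrefl m (h m hm)
  refine (fun hp hs => List.Perm.eq_of_pairwise' (Finset.pairwise_sort _ _) hs hp) ?_ ?_
  · have p1 : List.Perm ((insert m s).sort (· ≤ ·)) (insert m s).toList :=
      Finset.sort_perm_toList _ _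
    have p2 : List.Perm (insert m s).toList (m :: s.toList) := Finset.toList_insert hmns
    have p3 : List.Perm (m :: s.toList) (m :: s.sort (· ≤ ·)) :=
      List.Perm.cons m (Finset.sort_perm_toList _ _).symm
    have p4 : List.Perm (m :: s.sort (· ≤ ·)) (s.sort (· ≤ ·) ++ [m]) :=
      (List.perm_append_singleton _ _).symm
    exact ((p1.trans p2).trans p3).trans p4
  · rw [List.pairwise_append]
    refine ⟨Finset.pairwise_sort _ _, List.pairwise_singleton _ _, ?_⟩
    intro x hx y hy
    simp only [List.mem_singleton] at hy
    subst hy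
    exact (h x ((Finset.mem_sort _).mp hx)).le

lemma support_add_top {p : ℝ[X]} (hp : p ≠ 0) {b : ℝ} (hb : b ≠ 0) {m : ℕ}
    (hm : p.natDegree < m) :
    (p + C b * X ^ m).support = insert m p.support ∧ cl (p + C b * X ^ m) = cl p ++ [b] := by
  have hco : ∀ k, (p + C b * X ^ m).coeff k = if k = m then b else p.coeff k := by
    intro k
    rw [coeff_add, coeff_C_mul, coeff_X_pow]
    by_cases hk : k = m
    · subst hk
      rw [coeff_eq_zero_of_natDegree_lt hm]
      simp
    · simp [hk]
  have hsup : (p + C b * X ^ m).support = insert m p.support := by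
    ext k
    simp only [mem_support_iff, hco, Finset.mem_insert]
    by_cases hk : k = m
    · simp [hk, hb]
    · simp [hk, mem_support_iff]
  refine ⟨hsup, ?_⟩
  rw [cl, hsup, sort_insert_top (fun x hx => lt_of_le_of_lt (le_natDegree_of_mem_supp x hx) hm)]
  rw [List.map_append]
  congr 1
  · apply List.map_congr_left
    intro a ha
    have haa : a ≠ m :=
      ne_of_lt (lt_of_le_of_lt (le_natDegree_of_mem_supp a ((Finset.mem_sort _).mp ha)) hm)
    rw [hco]
    simp [haa]
  · simp [hco]

lemma V_concat_of_last {p : ℝ[X]} (hp : p ≠ 0) (b : ℝ) :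
    V (cl p ++ [b]) = V (cl p) + (if p.leadingCoeff * b < 0 then 1 else 0) := by
  have hins : p.support = insert p.natDegree (p.support.erase p.natDegree) :=
    (Finset.insert_erase (natDegree_mem_support_of_nonzero hp)).symm
  have hlt : ∀ x ∈ p.support.erase p.natDegree, x < p.natDegree := by
    intro x hx
    exact lt_of_le_of_ne (le_natDegree_of_mem_supp x (Finset.mem_of_mem_erase hx))
      (Finset.ne_of_mem_erase hx)
  have hl : cl p = ((p.support.erase p.natDegree).sort (· ≤ ·)).map (fun n => p.coeff n)
      ++ [p.leadingCoeff] := by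
    rw [cl]
    conv_lhs => rw [hins]
    rw [sort_insert_top hlt, List.map_append]
    rfl
  rw [hl]
  rw [show (((p.support.erase p.natDegree).sort (· ≤ ·)).map (fun n => p.coeff n)
      ++ [p.leadingCoeff]) ++ [b]
    = (((p.support.erase p.natDegree).sort (· ≤ ·)).map (fun n => p.coeff n)
      ++ [p.leadingCoeff]) ++ b :: [] from rfl]
  rw [V_append]
  simp

lemma comp_add_top (p : ℝ[X]) (b : ℝ) (m : ℕ) :
    (p + C b * X ^ m).comp (-X) = p.comp (-X) + C (b * (-1) ^ m) * X ^ m := by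
  rw [add_comp, mul_comp, C_comp, pow_comp, X_comp, neg_pow]
  rw [C_mul, map_pow, map_neg, map_one]
  ring

lemma coeff_zero_add_top (p : ℝ[X]) (b : ℝ) {m : ℕ} (hm : 0 < m) :
    (p + C b * X ^ m).coeff 0 = p.coeff 0 := by
  rw [coeff_add, coeff_C_mul, coeff_X_pow]
  have : ¬ ((0 : ℕ) = m) := by omega
  simp [this]

lemma W_add_top {p : ℝ[X]} (hp : p ≠ 0) {m : ℕ} (hm : p.natDegree < m) :
    ∃ q : ℝ[X], q ≠ 0 ∧ q.support = insert m p.support ∧ W p + 1 ≤ W q := by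
  set b := -p.leadingCoeff with hb
  have hb0 : b ≠ 0 := neg_ne_zero.mpr (leadingCoeff_ne_zero.mpr hp)
  obtain ⟨hs, hcl⟩ := support_add_top hp hb0 hm
  set q := p + C b * X ^ m with hq
  have hq0 : q ≠ 0 := by
    intro h
    have h2 : q.support = ∅ := by rw [h]; exact support_zero
    rw [hs] at h2
    simp at h2
  refine ⟨q, hq0, hs, ?_⟩
  have hVpos : V (cl q) = V (cl p) + 1 := by
    rw [show cl q = cl p ++ [b] from hcl, V_concat_of_last hp]
    have hlc : p.leadingCoeff ≠ 0 := leadingCoeff_ne_zero.mpr hp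
    have : p.leadingCoeff * b < 0 := by
      rw [hb]
      nlinarith [mul_self_pos.mpr hlc]
    simp [this]
  have hVneg : V (cl (p.comp (-X))) ≤ V (cl (q.comp (-X))) := by
    have h1 : q.comp (-X) = p.comp (-X) + C (b * (-1) ^ m) * X ^ m := comp_add_top p b m
    have hp' : p.comp (-X) ≠ 0 := comp_neg_X_ne_zero hp
    have hm' : (p.comp (-X)).natDegree < m := by rw [natDegree_comp_neg_X]; exact hm
    have hb' : b * (-1 : ℝ) ^ m ≠ 0 := mul_ne_zero hb0 (pow_ne_zero _ (by norm_num))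
    obtain ⟨-, hcl'⟩ := support_add_top hp' hb' hm'
    rw [h1, hcl', V_concat_of_last hp']
    exact Nat.le_add_right _ _
  have hm0 : 0 < m := by omega
  have hzero : q.coeff 0 = p.coeff 0 := coeff_zero_add_top p b hm0
  rw [W, W, hVpos, hzero]
  omega

lemma natDegree_le_of_support {f : ℝ[X]} {k : ℕ} (h : ∀ n ∈ f.support, n ≤ k) :
    f.natDegree ≤ k := by
  by_cases hf : f = 0
  · simp [hf]
  · exact h _ (natDegree_mem_support_of_nonzero hf)

lemma W_reduce {q : ℝ[X]} (hq : q ≠ 0) {m : ℕ} (hdeg : q.natDegree = m + 1) :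
    ∃ q' : ℝ[X], q' ≠ 0 ∧ q'.natDegree ≤ m ∧ q'.support ⊆ insert m q.support ∧
      W q ≤ W q' + 1 := by
  by_cases hp0 : q.eraseLead = 0
  · -- q is a monomial of degree m+1
    have h1 : q.eraseLead.support = ∅ := by rw [hp0]; exact support_zero
    rw [eraseLead_support] at h1
    have hsup : q.support = {m + 1} := by
      rcases (Finset.erase_eq_empty_iff _ _).mp h1 with h | h
      · exact absurd (support_eq_empty.mp h) hq
      · rw [← hdeg]; exact h
    have hWq : W q = 1 := by
      have hcl1 : cl q = [q.coeff (m + 1)] := by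
        rw [cl, hsup, Finset.sort_singleton]
        rfl
      have hcl2 : cl (q.comp (-X)) = [(q.comp (-X)).coeff (m + 1)] := by
        rw [cl, support_comp_neg_X, hsup, Finset.sort_singleton]
        rfl
      have hc0 : q.coeff 0 = 0 := by
        by_contra h
        have h2 : (0 : ℕ) ∈ q.support := mem_support_iff.mpr h
        rw [hsup] at h2
        simp at h2
      rw [W, hcl1, hcl2, hc0]
      simp
    refine ⟨X ^ m, pow_ne_zero _ X_ne_zero, ?_, ?_, ?_⟩
    · rw [natDegree_X_pow]
    · rw [support_X_pow]
      intro x hx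
      simp only [Finset.mem_singleton] at hx
      subst hx
      exact Finset.mem_insert_self _ _
    · rw [hWq]; omega
  · -- q has at least two terms
    have hcard : 2 ≤ q.support.card := by
      by_contra h
      push_neg at h
      have hmem := natDegree_mem_support_of_nonzero hq
      have hsing : q.support = {q.natDegree} := by
        apply Finset.eq_singleton_iff_unique_mem.mpr
        refine ⟨hmem, fun x hx => ?_⟩
        exact Finset.card_le_one.mp (by omega) x hx _ hmem
      have h1 : q.eraseLead.support = ∅ := by
        rw [eraseLead_support, hsing, Finset.erase_singleton]
      exact hp0 (support_eq_empty.mp h1)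
    have hd' : q.eraseLead.natDegree < m + 1 := hdeg ▸ eraseLead_natDegree_lt hcard
    have hlc : q.leadingCoeff ≠ 0 := leadingCoeff_ne_zero.mpr hq
    have hqe : q.eraseLead + C q.leadingCoeff * X ^ (m + 1) = q := by
      rw [← hdeg]
      exact eraseLead_add_C_mul_X_pow q
    obtain ⟨hsupq, hclq⟩ := support_add_top hp0 hlc hd'
    rw [hqe] at hsupq hclq
    have hVq : V (cl q) = V (cl q.eraseLead) +
        (if q.eraseLead.leadingCoeff * q.leadingCoeff < 0 then 1 else 0) := by
      rw [hclq, V_concat_of_last hp0]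
    have hcompq : q.comp (-X) = q.eraseLead.comp (-X)
        + C (q.leadingCoeff * (-1) ^ (m + 1)) * X ^ (m + 1) := by
      conv_lhs => rw [← hqe]
      exact comp_add_top _ _ _
    have hp0' : q.eraseLead.comp (-X) ≠ 0 := comp_neg_X_ne_zero hp0
    have hm'' : (q.eraseLead.comp (-X)).natDegree < m + 1 := by
      rw [natDegree_comp_neg_X]; exact hd'
    have hb'' : q.leadingCoeff * (-1 : ℝ) ^ (m + 1) ≠ 0 :=
      mul_ne_zero hlc (pow_ne_zero _ (by norm_num))
    obtain ⟨-, hclq'⟩ := support_add_top hp0' hb'' hm''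
    have hVqc : V (cl (q.comp (-X))) = V (cl (q.eraseLead.comp (-X))) +
        (if (q.eraseLead.comp (-X)).leadingCoeff * (q.leadingCoeff * (-1) ^ (m + 1)) < 0
          then 1 else 0) := by
      rw [hcompq, hclq', V_concat_of_last hp0']
    have hzeroq : q.coeff 0 = q.eraseLead.coeff 0 := by
      conv_lhs => rw [← hqe]
      exact coeff_zero_add_top _ _ (by omega)
    by_cases hd2 : q.eraseLead.natDegree = m
    · -- drop the leading term
      refine ⟨q.eraseLead, hp0, le_of_eq hd2, ?_, ?_⟩
      · rw [eraseLead_support]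
        exact (Finset.erase_subset _ _).trans (Finset.subset_insert _ _)
      · -- u + v = 1
        have hlead' : (q.eraseLead.comp (-X)).leadingCoeff
            = (-1) ^ m * q.eraseLead.leadingCoeff := by
          rw [leadingCoeff_comp_neg_X, hd2]
        have hlc' : q.eraseLead.leadingCoeff ≠ 0 := leadingCoeff_ne_zero.mpr hp0
        have hprod : (q.eraseLead.comp (-X)).leadingCoeff * (q.leadingCoeff * (-1) ^ (m + 1))
            = -(q.eraseLead.leadingCoeff * q.leadingCoeff) := by
          rw [hlead']
          have hpow : (-1 : ℝ) ^ m * (-1 : ℝ) ^ (m + 1) = -1 := by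
            rw [← pow_add]
            exact Odd.neg_one_pow ⟨m, by ring⟩
          calc (-1 : ℝ) ^ m * q.eraseLead.leadingCoeff * (q.leadingCoeff * (-1) ^ (m + 1))
              = (q.eraseLead.leadingCoeff * q.leadingCoeff) * ((-1 : ℝ) ^ m * (-1) ^ (m + 1)) := by
                ring
            _ = -(q.eraseLead.leadingCoeff * q.leadingCoeff) := by rw [hpow]; ring
        have hne0 : q.eraseLead.leadingCoeff * q.leadingCoeff ≠ 0 := mul_ne_zero hlc' hlc
        rw [W, W, hVq, hVqc, hzeroq, hprod]
        rcases lt_trichotomy (q.eraseLead.leadingCoeff * q.leadingCoeff) 0 with h | h | h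
        · rw [if_pos h, if_neg (by linarith)]
          omega
        · exact absurd h hne0
        · rw [if_neg (by linarith), if_pos (by linarith)]
          omega
    · -- move the leading term down to degree m
      have hd3 : q.eraseLead.natDegree < m := by omega
      set b' := -q.eraseLead.leadingCoeff with hb'
      have hb'0 : b' ≠ 0 := neg_ne_zero.mpr (leadingCoeff_ne_zero.mpr hp0)
      obtain ⟨hsup2, hcl2⟩ := support_add_top hp0 hb'0 hd3
      set q' := q.eraseLead + C b' * X ^ m with hq'
      have hq'0 : q' ≠ 0 := by
        intro h
        have h2 : q'.support = ∅ := by rw [h]; exact support_zero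
        rw [hsup2] at h2
        simp at h2
      have hVq' : V (cl q') = V (cl q.eraseLead) + 1 := by
        rw [show cl q' = cl q.eraseLead ++ [b'] from hcl2, V_concat_of_last hp0]
        have : q.eraseLead.leadingCoeff * b' < 0 := by
          rw [hb']
          nlinarith [mul_self_pos.mpr (leadingCoeff_ne_zero.mpr hp0)]
        simp [this]
      have hVq'c : V (cl (q.eraseLead.comp (-X))) ≤ V (cl (q'.comp (-X))) := by
        have h1 : q'.comp (-X) = q.eraseLead.comp (-X) + C (b' * (-1) ^ m) * X ^ m :=
          comp_add_top _ _ _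
        have hm3 : (q.eraseLead.comp (-X)).natDegree < m := by
          rw [natDegree_comp_neg_X]; exact hd3
        have hb3 : b' * (-1 : ℝ) ^ m ≠ 0 := mul_ne_zero hb'0 (pow_ne_zero _ (by norm_num))
        obtain ⟨-, hcl3⟩ := support_add_top hp0' hb3 hm3
        rw [h1, hcl3, V_concat_of_last hp0']
        exact Nat.le_add_right _ _
      have hm0 : 0 < m := by omega
      have hzeroq' : q'.coeff 0 = q.eraseLead.coeff 0 := coeff_zero_add_top _ _ hm0
      refine ⟨q', hq'0, ?_, ?_, ?_⟩
      · apply natDegree_le_of_support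
        intro n hn
        rw [hsup2] at hn
        rcases Finset.mem_insert.mp hn with rfl | hn'
        · exact le_rfl
        · exact le_trans (le_natDegree_of_mem_supp n hn') (le_of_lt hd3)
      · rw [hsup2]
        intro x hx
        rcases Finset.mem_insert.mp hx with rfl | hx'
        · exact Finset.mem_insert_self _ _
        · apply Finset.mem_insert_of_mem
          rw [eraseLead_support] at hx'
          exact Finset.mem_of_mem_erase hx'
      · rw [W, W, hVq, hVqc, hVq', hzeroq, hzeroq']
        have hu : (if q.eraseLead.leadingCoeff * q.leadingCoeff < 0 then 1 else 0) ≤ 1 := by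
          split <;> omega
        have hv : (if (q.eraseLead.comp (-X)).leadingCoeff
            * (q.leadingCoeff * (-1) ^ (m + 1)) < 0 then 1 else 0) ≤ 1 := by
          split <;> omega
        omega

end DescartesAux

open DescartesAux

/-- The `k`-th Descartes number of a subalgebra `R ⊆ ℝ[t]`: the maximal number of
distinct real zeros of a nonzero polynomial in `R` of degree at most `k`. -/
noncomputable def descartesNumber (R : Subalgebra ℝ ℝ[X]) (k : ℕ) : ℕ :=
  sSup {m : ℕ | ∃ f ∈ R, f ≠ 0 ∧ f.natDegree ≤ k ∧ f.roots.toFinset.card = m}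

namespace DescartesAux

def DSet (Rg : Subalgebra ℝ ℝ[X]) (k : ℕ) : Set ℕ :=
  {m : ℕ | ∃ f ∈ Rg, f ≠ 0 ∧ f.natDegree ≤ k ∧ f.roots.toFinset.card = m}

lemma descartesNumber_eq (Rg : Subalgebra ℝ ℝ[X]) (k : ℕ) :
    descartesNumber Rg k = sSup (DSet Rg k) := rfl

lemma DSet_nonempty (Rg : Subalgebra ℝ ℝ[X]) (k : ℕ) : (DSet Rg k).Nonempty :=
  ⟨0, 1, one_mem Rg, one_ne_zero, by simp, by simp⟩

lemma DSet_bdd (Rg : Subalgebra ℝ ℝ[X]) (k : ℕ) : BddAbove (DSet Rg k) := by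
  refine ⟨k, ?_⟩
  rintro m ⟨f, -, hf0, hdeg, rfl⟩
  calc f.roots.toFinset.card ≤ Multiset.card f.roots := Multiset.toFinset_card_le _
    _ ≤ f.natDegree := f.card_roots'
    _ ≤ k := hdeg

lemma mem_powers {Rg : Subalgebra ℝ ℝ[X]} {r : ℕ} {dv : Fin r → ℕ}
    (hR : Rg = Algebra.adjoin ℝ (Set.range fun i => (X : ℝ[X]) ^ dv i)) :
    ∀ f ∈ Rg, ∀ n ∈ f.support, (X : ℝ[X]) ^ n ∈ Rg := by
  set T : Subalgebra ℝ ℝ[X] :=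
    { carrier := {f : ℝ[X] | ∀ n ∈ f.support, (X : ℝ[X]) ^ n ∈ Rg}
      mul_mem' := by
        intro a b ha hb n hn
        have h1 : (a * b).coeff n ≠ 0 := mem_support_iff.mp hn
        rw [coeff_mul] at h1
        obtain ⟨x, hx, hne⟩ := Finset.exists_ne_zero_of_sum_ne_zero h1
        have hxy : x.1 + x.2 = n := Finset.HasAntidiagonal.mem_antidiagonal.mp hx
        have ha' := ha x.1 (mem_support_iff.mpr (left_ne_zero_of_mul hne))
        have hb' := hb x.2 (mem_support_iff.mpr (right_ne_zero_of_mul hne))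
        rw [← hxy, pow_add]
        exact mul_mem ha' hb'
      add_mem' := by
        intro a b ha hb n hn
        rcases Finset.mem_union.mp (support_add hn) with h | h
        exacts [ha n h, hb n h]
      algebraMap_mem' := by
        intro r0 n hn
        have h1 : (algebraMap ℝ ℝ[X]) r0 = C r0 := by rw [algebraMap_eq]
        rw [h1] at hn
        have h0 : n = 0 := by
          by_contra h
          exact mem_support_iff.mp hn (by simp [coeff_C, h])
        rw [h0, pow_zero]
        exact one_mem Rg } with hT
  intro f hf
  have hsub : Rg ≤ T := by
    conv_lhs => rw [hR]
    apply Algebra.adjoin_le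
    rintro _ ⟨i, rfl⟩
    intro n hn
    have hs : ((X : ℝ[X]) ^ dv i).support = {dv i} := support_X_pow _
    rw [hs] at hn
    simp only [Finset.mem_singleton] at hn
    subst hn
    rw [hR]
    exact Algebra.subset_adjoin ⟨i, rfl⟩
  exact fun n hn => hsub hf n hn

lemma mem_of_support {Rg : Subalgebra ℝ ℝ[X]} {f : ℝ[X]}
    (h : ∀ n ∈ f.support, (X : ℝ[X]) ^ n ∈ Rg) : f ∈ Rg := by
  have hsum := f.as_sum_support
  rw [hsum]
  apply Subalgebra.sum_mem
  intro n hn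
  rw [← C_mul_X_pow_eq_monomial]
  refine mul_mem ?_ (h n hn)
  rw [← algebraMap_eq]
  exact Subalgebra.algebraMap_mem Rg _

lemma step {r : ℕ} {dv : Fin r → ℕ} {Rg : Subalgebra ℝ ℝ[X]}
    (hR : Rg = Algebra.adjoin ℝ (Set.range fun i => (X : ℝ[X]) ^ dv i))
    {c : ℕ} (hc : ∀ m : ℕ, c ≤ m → (X : ℝ[X]) ^ m ∈ Rg) {m : ℕ} (hm : c ≤ m) :
    descartesNumber Rg (m + 1) = descartesNumber Rg m + 1 := by
  rw [descartesNumber_eq, descartesNumber_eq]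
  have hge : sSup (DSet Rg m) + 1 ≤ sSup (DSet Rg (m + 1)) := by
    obtain ⟨f, hfR, hf0, hdeg, hcard⟩ := Nat.sSup_mem (DSet_nonempty Rg m) (DSet_bdd Rg m)
    obtain ⟨q, hq0, hqsupp, hWq⟩ := W_add_top hf0 (show f.natDegree < m + 1 by omega)
    obtain ⟨g, hg0, hgsupp, hWg⟩ := realize q hq0
    have hgR : g ∈ Rg := by
      apply mem_of_support
      intro n hn
      rw [hgsupp, hqsupp] at hn
      rcases Finset.mem_insert.mp hn with rfl | hn'
      · exact hc _ (by omega)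
      · exact mem_powers hR f hfR n hn'
    have hgdeg : g.natDegree ≤ m + 1 := by
      apply natDegree_le_of_support
      intro n hn
      rw [hgsupp, hqsupp] at hn
      rcases Finset.mem_insert.mp hn with rfl | hn'
      · exact le_rfl
      · have := le_natDegree_of_mem_supp n hn'
        omega
    have h1 : sSup (DSet Rg m) ≤ W f := hcard ▸ card_roots_le_W f hf0
    have h2 : g.roots.toFinset.card ≤ sSup (DSet Rg (m + 1)) :=
      le_csSup (DSet_bdd Rg (m + 1)) ⟨g, hgR, hg0, hgdeg, rfl⟩
    omega
  have hle : sSup (DSet Rg (m + 1)) ≤ sSup (DSet Rg m) + 1 := by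
    obtain ⟨f, hfR, hf0, hdeg, hcard⟩ :=
      Nat.sSup_mem (DSet_nonempty Rg (m + 1)) (DSet_bdd Rg (m + 1))
    rcases le_or_gt f.natDegree m with hle' | hgt
    · have h1 : sSup (DSet Rg (m + 1)) ≤ sSup (DSet Rg m) :=
        hcard ▸ le_csSup (DSet_bdd Rg m) ⟨f, hfR, hf0, hle', rfl⟩
      omega
    · have hdeg' : f.natDegree = m + 1 := by omega
      obtain ⟨q', hq'0, hq'deg, hq'supp, hWq'⟩ := W_reduce hf0 hdeg'
      obtain ⟨g, hg0, hgsupp, hWg⟩ := realize q' hq'0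
      have hgR : g ∈ Rg := by
        apply mem_of_support
        intro n hn
        rw [hgsupp] at hn
        rcases Finset.mem_insert.mp (hq'supp hn) with rfl | hn'
        · exact hc _ hm
        · exact mem_powers hR f hfR n hn'
      have hgdeg : g.natDegree ≤ m := by
        apply natDegree_le_of_support
        intro n hn
        rw [hgsupp] at hn
        exact le_trans (le_natDegree_of_mem_supp n hn) hq'deg
      have h1 : sSup (DSet Rg (m + 1)) ≤ W f := hcard ▸ card_roots_le_W f hf0
      have h2 : g.roots.toFinset.card ≤ sSup (DSet Rg m) :=
        le_csSup (DSet_bdd Rg m) ⟨g, hgR, hg0, hgdeg, rfl⟩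
      omega
  omega

end DescartesAux

/-- For `R = ℝ[t^{d₁},…,t^{d_r}]` with `gcd = 1` and conductor `c`, the Descartes
numbers satisfy `D_{c+k} = D_c + k` for all `k ≥ 0`. -/
theorem descartes_shift (r : ℕ) (dv : Fin r → ℕ)
    (hgcd : Finset.univ.gcd dv = 1)
    (R : Subalgebra ℝ ℝ[X])
    (hR : R = Algebra.adjoin ℝ (Set.range fun i => (X : ℝ[X]) ^ dv i))
    (c : ℕ)
    (hc : IsLeast {c : ℕ | ∀ m : ℕ, c ≤ m → (X : ℝ[X]) ^ m ∈ R} c) :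
    ∀ k : ℕ, descartesNumber R (c + k) = descartesNumber R c + k := by
  intro k
  induction k with
  | zero => simp
  | succ k ih =>
    have hstep := DescartesAux.step hR hc.1 (Nat.le_add_right c k)
    have h1 : c + (k + 1) = (c + k) + 1 := by omega
    rw [h1, hstep, ih]
    omega
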